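/- Let m ≥ 1, N ≥ 2, 1 ≤ z ≤ N−1, and let q ∈ ℂ with q ≠ 0 and q^{2m} = 1. On the index set of functions Fin (N+z) → ZMod m, define matrices A and B by: A(v,w) = T(v∘ι, w∘ι) if v(p) = w(p) for all N ≤ p < N+z, and 0 otherwise, where ι : Fin N → Fin (N+z) is the inclusion of the first N coordinates; B(v,w) = T(v∘ι', w∘ι') if v(p) = w(p) for all 0 ≤ p < z, and 0 otherwise, where ι' : Fin N → Fin (N+z) is the inclusion p ↦ p+z of the last N coordinates. Then A·B = q²·(B·A). -/

import Mathlib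

open Finset Matrix

/-- The matrix `T = σx ⊗ σy^{⊗(N−1)}` on `(ℂ^m)^{⊗N}`, with rows and columns
indexed by functions `v : Fin N → ZMod m`:
`T(v,w) = q^{ŵ(0) − ∑_{i=1}^{N−1} ŵ(i)}` if `v(i) = w(i) − 1` for all `i`, else `0`. -/
noncomputable def Tmat (m N : ℕ) (q : ℂ) :
    Matrix (Fin N → ZMod m) (Fin N → ZMod m) ℂ :=
  fun v w =>
    if ∀ i, v i = w i - 1 then
      q ^ (∑ i : Fin N, if (i : ℕ) = 0 then ((w i).val : ℤ) else -((w i).val : ℤ))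
    else 0

/-- The inclusion `ι : Fin N → Fin (N+z)` of the first `N` coordinates. -/
def iota (N z : ℕ) : Fin N → Fin (N + z) := Fin.castAdd z

/-- The inclusion `ι' : Fin N → Fin (N+z)`, `p ↦ p + z`, of the last `N` coordinates. -/
def iota' (N z : ℕ) : Fin N → Fin (N + z) :=
  fun p => ⟨(p : ℕ) + z, by have := p.isLt; omega⟩

/-- `A` acts by `T` on the first `N` tensor factors, identically on the rest. -/
noncomputable def Amat (m N z : ℕ) (q : ℂ) :
    Matrix (Fin (N + z) → ZMod m) (Fin (N + z) → ZMod m) ℂ :=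
  fun v w =>
    if ∀ p : Fin (N + z), N ≤ (p : ℕ) → v p = w p then
      Tmat m N q (v ∘ iota N z) (w ∘ iota N z)
    else 0

/-- `B` acts by `T` on the last `N` tensor factors, identically on the rest. -/
noncomputable def Bmat (m N z : ℕ) (q : ℂ) :
    Matrix (Fin (N + z) → ZMod m) (Fin (N + z) → ZMod m) ℂ :=
  fun v w =>
    if ∀ p : Fin (N + z), (p : ℕ) < z → v p = w p then
      Tmat m N q (v ∘ iota' N z) (w ∘ iota' N z)
    else 0

/-- Shift on the first `N` coordinates. -/
def sA (m N z : ℕ) (v : Fin (N + z) → ZMod m) : Fin (N + z) → ZMod m :=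
  fun p => if (p : ℕ) < N then v p + 1 else v p

/-- Shift on the last `N` coordinates. -/
def sB (m N z : ℕ) (v : Fin (N + z) → ZMod m) : Fin (N + z) → ZMod m :=
  fun p => if z ≤ (p : ℕ) then v p + 1 else v p

/-- Double shift. -/
def sC (m N z : ℕ) (v : Fin (N + z) → ZMod m) : Fin (N + z) → ZMod m :=
  fun p => if (p : ℕ) < z then v p + 1 else if (p : ℕ) < N then v p + 2 else v p + 1

/-- The exponent appearing in `Tmat`. -/
def Ex (m N : ℕ) (x : Fin N → ZMod m) : ℤ :=
  ∑ i : Fin N, if (i : ℕ) = 0 then ((x i).val : ℤ) else -((x i).val : ℤ)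

lemma sB_sA (m N z : ℕ) (hz : z < N) (v : Fin (N + z) → ZMod m) :
    sB m N z (sA m N z v) = sC m N z v := by
  funext p
  simp only [sA, sB, sC]
  split_ifs <;> first | ring1 | (exfalso; omega)

lemma sA_sB (m N z : ℕ) (hz : z < N) (v : Fin (N + z) → ZMod m) :
    sA m N z (sB m N z v) = sC m N z v := by
  funext p
  simp only [sA, sB, sC]
  split_ifs <;> first | ring1 | (exfalso; omega)

lemma Amat_ne (m N z : ℕ) (q : ℂ) (v w : Fin (N + z) → ZMod m)
    (h : w ≠ sA m N z v) : Amat m N z q v w = 0 := by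
  unfold Amat Tmat
  split_ifs with h1 h2
  · exfalso; apply h; funext p
    unfold sA
    by_cases hp : (p : ℕ) < N
    · have hped : iota N z ⟨p.1, hp⟩ = p := by
        simp [iota, Fin.ext_iff]
      have := h2 ⟨p.1, hp⟩
      simp only [Function.comp_apply, hped] at this
      rw [if_pos hp, this]; ring
    · rw [if_neg hp, ← h1 p (by omega)]
  · rfl
  · rfl

lemma Bmat_ne (m N z : ℕ) (q : ℂ) (v w : Fin (N + z) → ZMod m)
    (h : w ≠ sB m N z v) : Bmat m N z q v w = 0 := by
  unfold Bmat Tmat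
  split_ifs with h1 h2
  · exfalso; apply h; funext p
    unfold sB
    by_cases hp : z ≤ (p : ℕ)
    · have hplt : p.1 - z < N := by have := p.isLt; omega
      have hped : iota' N z ⟨p.1 - z, hplt⟩ = p := by
        simp [iota', Fin.ext_iff]; omega
      have := h2 ⟨p.1 - z, hplt⟩
      simp only [Function.comp_apply, hped] at this
      rw [if_pos hp, this]; ring
    · rw [if_neg hp, ← h1 p (by omega)]
  · rfl
  · rfl

lemma Amat_pos (m N z : ℕ) (q : ℂ) (v : Fin (N + z) → ZMod m) :
    Amat m N z q v (sA m N z v) = q ^ Ex m N ((sA m N z v) ∘ iota N z) := by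
  unfold Amat Tmat Ex
  rw [if_pos, if_pos]
  · intro i
    simp only [Function.comp_apply, sA, iota, Fin.coe_castAdd, i.isLt, if_pos]
    ring
  · intro p hp
    simp only [sA]
    rw [if_neg (by omega)]

lemma Bmat_pos (m N z : ℕ) (q : ℂ) (v : Fin (N + z) → ZMod m) :
    Bmat m N z q v (sB m N z v) = q ^ Ex m N ((sB m N z v) ∘ iota' N z) := by
  unfold Bmat Tmat Ex
  rw [if_pos, if_pos]
  · intro i
    have : z ≤ (iota' N z i : ℕ) := by simp [iota']
    simp only [Function.comp_apply, sB, this, if_pos]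
    ring
  · intro p hp
    simp only [sB]
    rw [if_neg (by omega)]

lemma Ex_eq (m N : ℕ) (hN : 0 < N) (x : Fin N → ZMod m) :
    Ex m N x = 2 * ((x ⟨0, hN⟩).val : ℤ) - ∑ i : Fin N, ((x i).val : ℤ) := by
  unfold Ex
  have key : ∀ i : Fin N, (if (i : ℕ) = 0 then ((x i).val : ℤ) else -((x i).val : ℤ))
      = (if i = ⟨0, hN⟩ then 2 * ((x i).val : ℤ) else 0) - ((x i).val : ℤ) := by
    intro i
    by_cases h : i = ⟨0, hN⟩
    · subst h; simp; ring
    · rw [if_neg h, if_neg (by simpa [Fin.ext_iff] using h)]; ring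
  rw [Finset.sum_congr rfl (fun i _ => key i), Finset.sum_sub_distrib,
    Finset.sum_ite_eq' Finset.univ ⟨0, hN⟩ (fun i => 2 * ((x i).val : ℤ))]
  simp

lemma sum_iota (N z : ℕ) (D : Fin (N + z) → ℤ)
    (h : ∀ p : Fin (N + z), N ≤ (p : ℕ) → D p = 0) :
    ∑ i : Fin N, D (iota N z i) = ∑ p : Fin (N + z), D p := by
  have hinj : ∀ a ∈ (Finset.univ : Finset (Fin N)), ∀ b ∈ Finset.univ,
      iota N z a = iota N z b → a = b := by
    intro a _ b _ hab
    simpa [iota, Fin.ext_iff] using hab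
  rw [← Finset.sum_image hinj]
  apply Finset.sum_subset (Finset.subset_univ _)
  intro p _ hp
  apply h
  by_contra hc
  push_neg at hc
  exact hp (Finset.mem_image.2 ⟨⟨p.1, hc⟩, Finset.mem_univ _, by simp [iota, Fin.ext_iff]⟩)

lemma sum_iota' (N z : ℕ) (D : Fin (N + z) → ℤ)
    (h : ∀ p : Fin (N + z), (p : ℕ) < z → D p = 0) :
    ∑ i : Fin N, D (iota' N z i) = ∑ p : Fin (N + z), D p := by
  have hinj : ∀ a ∈ (Finset.univ : Finset (Fin N)), ∀ b ∈ Finset.univ,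
      iota' N z a = iota' N z b → a = b := by
    intro a _ b _ hab
    simpa [iota', Fin.ext_iff] using hab
  rw [← Finset.sum_image hinj]
  apply Finset.sum_subset (Finset.subset_univ _)
  intro p _ hp
  apply h
  by_contra hc
  push_neg at hc
  have hlt : p.1 - z < N := by have := p.isLt; omega
  exact hp (Finset.mem_image.2 ⟨⟨p.1 - z, hlt⟩, Finset.mem_univ _,
    by simp [iota', Fin.ext_iff]; omega⟩)

lemma qpow_key (m : ℕ) [NeZero m] (q : ℂ) (hq0 : q ≠ 0) (hq : q ^ (2 * m) = 1)
    (a : ZMod m) :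
    q ^ (2 * (((a + 1).val : ℤ) - (a.val : ℤ))) = q ^ (2 : ℤ) := by
  have hm : 0 < m := Nat.pos_of_ne_zero (NeZero.ne m)
  have hlt : a.val < m := ZMod.val_lt a
  have hq2 : q ^ ((2 : ℤ) * m) = 1 := by
    rw [show ((2 : ℤ) * m) = ((2 * m : ℕ) : ℤ) by push_cast; ring, zpow_natCast, hq]
  have hval : (a + 1).val = (a.val + 1 % m) % m := by
    rw [ZMod.val_add, ZMod.val_one_eq_one_mod]
  by_cases hm1 : m = 1
  · subst hm1
    have hlt1 : (a + 1).val < 1 := ZMod.val_lt _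
    have h0 : a.val = 0 := by omega
    have h1 : (a + 1).val = 0 := by omega
    rw [h0, h1]
    norm_num
    rw [← hq2]
    norm_num
  · have h1m : 1 % m = 1 := Nat.mod_eq_of_lt (by omega)
    rw [h1m] at hval
    by_cases hc : a.val + 1 = m
    · have h0 : (a + 1).val = 0 := by rw [hval, hc, Nat.mod_self]
      have he : 2 * (((a + 1).val : ℤ) - (a.val : ℤ)) = 2 + -((2 : ℤ) * m) := by
        rw [h0]; push_cast; omega
      rw [he, zpow_add₀ hq0, _root_.zpow_neg, hq2, inv_one, mul_one]
    · have h1 : (a + 1).val = a.val + 1 := by rw [hval, Nat.mod_eq_of_lt (by omega)]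
      have he : 2 * (((a + 1).val : ℤ) - (a.val : ℤ)) = 2 := by
        rw [h1]; push_cast; ring
      rw [he]

/-- For `1 ≤ z ≤ N−1` and `q ≠ 0` with `q^{2m} = 1`, the shifted copies of `T`
satisfy `A·B = q²·(B·A)`.  (The instance `[NeZero m]` encodes `m ≥ 1`.) -/
theorem stmt15 (m N z : ℕ) [NeZero m] (hN : 2 ≤ N) (hz1 : 1 ≤ z) (hz2 : z ≤ N - 1)
    (q : ℂ) (hq0 : q ≠ 0) (hq : q ^ (2 * m) = 1) :
    Amat m N z q * Bmat m N z q = q ^ 2 • (Bmat m N z q * Amat m N z q) := by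
  have hzN : z < N := by omega
  have hN0 : 0 < N := by omega
  ext v u
  rw [Matrix.mul_apply, Matrix.smul_apply, Matrix.mul_apply]
  rw [Finset.sum_eq_single (sA m N z v)
    (fun w _ hw => by rw [Amat_ne m N z q v w hw, zero_mul])
    (fun hmem => absurd (Finset.mem_univ _) hmem)]
  rw [Finset.sum_eq_single (sB m N z v)
    (fun w _ hw => by rw [Bmat_ne m N z q v w hw, zero_mul])
    (fun hmem => absurd (Finset.mem_univ _) hmem)]
  by_cases hu : u = sC m N z v
  · subst hu
    have hB1 : Bmat m N z q (sA m N z v) (sC m N z v)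
        = q ^ Ex m N (sC m N z v ∘ iota' N z) := by
      rw [← sB_sA m N z hzN v]
      exact Bmat_pos m N z q (sA m N z v)
    have hA2 : Amat m N z q (sB m N z v) (sC m N z v)
        = q ^ Ex m N (sC m N z v ∘ iota N z) := by
      rw [← sA_sB m N z hzN v]
      exact Amat_pos m N z q (sB m N z v)
    rw [hB1, hA2, Amat_pos, Bmat_pos]
    -- now pure exponent arithmetic
    set p0 : Fin (N + z) := ⟨0, by omega⟩ with hp0
    set zp : Fin (N + z) := ⟨z, by omega⟩ with hzp
    set V : Fin (N + z) → ℤ := fun p => ((v p + 1).val : ℤ) with hV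
    set U : Fin (N + z) → ℤ := fun p => (((sC m N z v) p).val : ℤ) with hU
    have hA : ∀ i : Fin N, ((sA m N z v ∘ iota N z) i) = v (iota N z i) + 1 := by
      intro i
      simp only [Function.comp_apply, sA, iota, Fin.coe_castAdd, i.isLt, if_pos]
    have hB : ∀ i : Fin N, ((sB m N z v ∘ iota' N z) i) = v (iota' N z i) + 1 := by
      intro i
      have : z ≤ (iota' N z i : ℕ) := by simp [iota']
      simp only [Function.comp_apply, sB, this, if_pos]
    have hhead0 : iota N z ⟨0, hN0⟩ = p0 := by simp [iota, hp0, Fin.ext_iff]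
    have hheadz : iota' N z ⟨0, hN0⟩ = zp := by simp [iota', hzp, Fin.ext_iff]
    have e1 : Ex m N (sA m N z v ∘ iota N z)
        = 2 * V p0 - ∑ i : Fin N, V (iota N z i) := by
      have hs : (∑ i : Fin N, (((sA m N z v ∘ iota N z) i).val : ℤ))
          = ∑ i : Fin N, ((v (iota N z i) + 1).val : ℤ) :=
        Finset.sum_congr rfl fun i _ => by rw [hA i]
      simp only [hV]
      rw [Ex_eq m N hN0, hA ⟨0, hN0⟩, hhead0, hs]
    have e2 : Ex m N (sC m N z v ∘ iota' N z)
        = 2 * U zp - ∑ i : Fin N, U (iota' N z i) := by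
      simp only [hU]
      rw [Ex_eq m N hN0]
      simp only [Function.comp_apply]
      rw [hheadz]
    have e3 : Ex m N (sB m N z v ∘ iota' N z)
        = 2 * V zp - ∑ i : Fin N, V (iota' N z i) := by
      have hs : (∑ i : Fin N, (((sB m N z v ∘ iota' N z) i).val : ℤ))
          = ∑ i : Fin N, ((v (iota' N z i) + 1).val : ℤ) :=
        Finset.sum_congr rfl fun i _ => by rw [hB i]
      simp only [hV]
      rw [Ex_eq m N hN0, hB ⟨0, hN0⟩, hheadz, hs]
    have e4 : Ex m N (sC m N z v ∘ iota N z)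
        = 2 * U p0 - ∑ i : Fin N, U (iota N z i) := by
      simp only [hU]
      rw [Ex_eq m N hN0]
      simp only [Function.comp_apply]
      rw [hhead0]
    have hUp0 : U p0 = V p0 := by
      simp only [hU, hV, sC, hp0]
      rw [if_pos (by exact hz1)]
    have hUzp : U zp = ((v zp + 1 + 1).val : ℤ) := by
      simp only [hU, sC, hzp]
      rw [if_neg (by simp), if_pos (by simpa using hzN)]
      norm_num
      ring_nf
    have hDzero : ∀ p : Fin (N + z), N ≤ (p : ℕ) → U p - V p = 0 := by
      intro p hp
      simp only [hU, hV, sC]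
      rw [if_neg (by omega), if_neg (by omega)]
      ring
    have hDzero' : ∀ p : Fin (N + z), (p : ℕ) < z → U p - V p = 0 := by
      intro p hp
      simp only [hU, hV, sC]
      rw [if_pos hp]
      ring
    have hsum : ∑ i : Fin N, (U (iota N z i) - V (iota N z i))
        = ∑ i : Fin N, (U (iota' N z i) - V (iota' N z i)) := by
      rw [sum_iota N z _ hDzero, sum_iota' N z _ hDzero']
    rw [Finset.sum_sub_distrib, Finset.sum_sub_distrib] at hsum
    have key : Ex m N (sA m N z v ∘ iota N z) + Ex m N (sC m N z v ∘ iota' N z)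
        = 2 * (U zp - V zp)
          + (Ex m N (sB m N z v ∘ iota' N z) + Ex m N (sC m N z v ∘ iota N z)) := by
      rw [e1, e2, e3, e4, hUp0]
      linarith
    have hqd : q ^ (2 * (U zp - V zp)) = q ^ (2 : ℤ) := by
      have := qpow_key m q hq0 hq (v zp + 1)
      rw [hUzp, hV]
      exact this
    calc q ^ Ex m N (sA m N z v ∘ iota N z) * q ^ Ex m N (sC m N z v ∘ iota' N z)
        = q ^ (Ex m N (sA m N z v ∘ iota N z) + Ex m N (sC m N z v ∘ iota' N z)) :=
          (zpow_add₀ hq0 _ _).symm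
      _ = q ^ (2 * (U zp - V zp))
            * q ^ (Ex m N (sB m N z v ∘ iota' N z) + Ex m N (sC m N z v ∘ iota N z)) := by
          rw [key, zpow_add₀ hq0]
      _ = q ^ (2 : ℤ) * (q ^ Ex m N (sB m N z v ∘ iota' N z)
            * q ^ Ex m N (sC m N z v ∘ iota N z)) := by
          rw [hqd, zpow_add₀ hq0]
      _ = q ^ 2 • (q ^ Ex m N (sB m N z v ∘ iota' N z)
            * q ^ Ex m N (sC m N z v ∘ iota N z)) := by
          rw [smul_eq_mul, ← zpow_natCast q 2]
          norm_num
  · have h1 : Bmat m N z q (sA m N z v) u = 0 := by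
      apply Bmat_ne
      rw [sB_sA m N z hzN v]
      exact hu
    have h2 : Amat m N z q (sB m N z v) u = 0 := by
      apply Amat_ne
      rw [sA_sB m N z hzN v]
      exact hu
    rw [h1, h2, mul_zero, mul_zero, smul_zero]
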